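/- Let k ∈ ℤ, k ≠ 0, α, β ∈ ℂ, and let ĥ(y) = a e^{|k|(y−1)} + b e^{−|k|y} be the solution of ĥ'' = k²ĥ on [0,1] with ĥ'(0) = α, ĥ'(1) = β. Then there is an absolute constant C with k²‖ĥ‖²_{L²(0,1)} ≤ C(|α|² + |β|²) and ‖ĥ'‖²_{L²(0,1)} ≤ C(|α|² + |β|²). -/

import Mathlib

set_option maxHeartbeats 800000


open MeasureTheory Set

lemma exp_integral' (c : ℝ) (hc : c ≠ 0) :
    ∫ y in Icc (0:ℝ) 1, Real.exp (c * y) = (Real.exp c - 1) / c := by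
  rw [MeasureTheory.integral_Icc_eq_integral_Ioc,
    ← intervalIntegral.integral_of_le (by norm_num : (0:ℝ) ≤ 1)]
  have key : ∀ y ∈ Set.uIcc (0:ℝ) 1,
      HasDerivAt (fun x => Real.exp (c * x) / c) (Real.exp (c * y)) y := by
    intro y _
    have h : HasDerivAt (fun x : ℝ => Real.exp (c * x)) (Real.exp (c * y) * c) y := by
      simpa using ((hasDerivAt_id y).const_mul c).exp
    have h2 := h.div_const c
    simpa [mul_div_assoc, hc] using h2
  rw [intervalIntegral.integral_eq_sub_of_hasDerivAt key
    ((Real.continuous_exp.comp (continuous_const.mul continuous_id)).intervalIntegrable 0 1)]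
  rw [mul_zero, mul_one, Real.exp_zero]
  ring

lemma key2 (K : ℝ) (hK : 1 ≤ K) (a b : ℂ) :
    (∫ y in Icc (0:ℝ) 1,
      ‖a * Complex.exp (((K * (y - 1) : ℝ)) : ℂ) + b * Complex.exp (((-(K * y) : ℝ)) : ℂ)‖ ^ 2)
    ≤ (‖a‖ ^ 2 + ‖b‖ ^ 2) / K := by
  have hK0 : 0 < K := one_pos.trans_le hK
  set f : ℝ → ℝ := fun y =>
    ‖a * Complex.exp (((K * (y - 1) : ℝ)) : ℂ) + b * Complex.exp (((-(K * y) : ℝ)) : ℂ)‖ ^ 2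
    with hfdef
  set g : ℝ → ℝ := fun y =>
    2 * ‖a‖ ^ 2 * (Real.exp (-(2*K)) * Real.exp ((2*K) * y)) +
      2 * ‖b‖ ^ 2 * Real.exp ((-(2*K)) * y) with hgdef
  have hcf : Continuous f := by fun_prop
  have hcg1 : Continuous fun y : ℝ => 2 * ‖a‖ ^ 2 * (Real.exp (-(2*K)) * Real.exp ((2*K) * y)) := by
    fun_prop
  have hcg2 : Continuous fun y : ℝ => 2 * ‖b‖ ^ 2 * Real.exp ((-(2*K)) * y) := by fun_prop
  have hcg : Continuous g := hcg1.add hcg2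
  have hpt : ∀ y ∈ Icc (0:ℝ) 1, f y ≤ g y := by
    intro y _
    have h1 : ‖a * Complex.exp (((K * (y - 1) : ℝ)) : ℂ) + b * Complex.exp (((-(K * y) : ℝ)) : ℂ)‖
        ≤ ‖a‖ * Real.exp (K * (y - 1)) + ‖b‖ * Real.exp (-(K * y)) := by
      refine (norm_add_le _ _).trans ?_
      rw [norm_mul, norm_mul, Complex.norm_exp_ofReal, Complex.norm_exp_ofReal]
    have h2 : f y ≤ (‖a‖ * Real.exp (K * (y - 1)) + ‖b‖ * Real.exp (-(K * y))) ^ 2 :=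
      pow_le_pow_left₀ (norm_nonneg _) h1 2
    have he1 : Real.exp (K * (y - 1)) ^ 2 = Real.exp (-(2*K)) * Real.exp ((2*K) * y) := by
      rw [sq, ← Real.exp_add, ← Real.exp_add]; congr 1; ring
    have he2 : Real.exp (-(K * y)) ^ 2 = Real.exp ((-(2*K)) * y) := by
      rw [sq, ← Real.exp_add]; congr 1; ring
    refine h2.trans ?_
    have hq := sq_nonneg (‖a‖ * Real.exp (K * (y - 1)) - ‖b‖ * Real.exp (-(K * y)))
    have : (‖a‖ * Real.exp (K * (y - 1)) + ‖b‖ * Real.exp (-(K * y))) ^ 2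
        ≤ 2 * (‖a‖ * Real.exp (K * (y - 1))) ^ 2 + 2 * (‖b‖ * Real.exp (-(K * y))) ^ 2 := by
      nlinarith [hq]
    refine this.trans_eq ?_
    simp only [hgdef]
    rw [mul_pow, mul_pow, he1, he2]
    ring
  have hmono : (∫ y in Icc (0:ℝ) 1, f y) ≤ ∫ y in Icc (0:ℝ) 1, g y :=
    setIntegral_mono_on hcf.integrableOn_Icc hcg.integrableOn_Icc measurableSet_Icc hpt
  have i1 : ∫ y in Icc (0:ℝ) 1, Real.exp ((2*K) * y) = (Real.exp (2*K) - 1) / (2*K) :=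
    exp_integral' _ (by positivity)
  have i2 : ∫ y in Icc (0:ℝ) 1, Real.exp ((-(2*K)) * y) = (Real.exp (-(2*K)) - 1) / (-(2*K)) :=
    exp_integral' _ (by simp; positivity)
  have hsum : (∫ y in Icc (0:ℝ) 1, g y)
      = 2 * ‖a‖ ^ 2 * (Real.exp (-(2*K)) * ((Real.exp (2*K) - 1) / (2*K)))
        + 2 * ‖b‖ ^ 2 * ((Real.exp (-(2*K)) - 1) / (-(2*K))) := by
    simp only [hgdef]
    rw [MeasureTheory.integral_add hcg1.integrableOn_Icc hcg2.integrableOn_Icc,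
      integral_const_mul, integral_const_mul, integral_const_mul, i1, i2]
  have hprod : Real.exp (-(2*K)) * Real.exp (2*K) = 1 := by
    rw [← Real.exp_add]; simp
  have hEpos : 0 < Real.exp (-(2*K)) := Real.exp_pos _
  have hEle : Real.exp (-(2*K)) ≤ 1 := Real.exp_le_one_iff.mpr (by linarith)
  refine hmono.trans ?_
  rw [hsum]
  have e1 : 2 * ‖a‖ ^ 2 * (Real.exp (-(2*K)) * ((Real.exp (2*K) - 1) / (2*K)))
      = ‖a‖ ^ 2 * ((1 - Real.exp (-(2*K))) / K) := by
    field_simp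
    linear_combination ‖a‖ ^ 2 * hprod
  have e2 : 2 * ‖b‖ ^ 2 * ((Real.exp (-(2*K)) - 1) / (-(2*K)))
      = ‖b‖ ^ 2 * ((1 - Real.exp (-(2*K))) / K) := by
    field_simp
    ring
  rw [e1, e2]
  have hfrac : (1 - Real.exp (-(2*K))) / K ≤ 1 / K := by
    apply div_le_div_of_nonneg_right (by linarith) hK0.le
  have l1 : ‖a‖ ^ 2 * ((1 - Real.exp (-(2*K))) / K) ≤ ‖a‖ ^ 2 * (1 / K) :=
    mul_le_mul_of_nonneg_left hfrac (sq_nonneg _)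
  have l2 : ‖b‖ ^ 2 * ((1 - Real.exp (-(2*K))) / K) ≤ ‖b‖ ^ 2 * (1 / K) :=
    mul_le_mul_of_nonneg_left hfrac (sq_nonneg _)
  have lr : ‖a‖ ^ 2 * (1 / K) + ‖b‖ ^ 2 * (1 / K) = (‖a‖ ^ 2 + ‖b‖ ^ 2) / K := by ring
  linarith

lemma final_bound (K : ℝ) (hK : 1 ≤ K) (α β : ℂ) :
    K * (‖(((Real.exp K : ℝ) : ℂ) * β - α) /
            (((K : ℝ) : ℂ) * ((Real.exp K - Real.exp (-K) : ℝ) : ℂ))‖ ^ 2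
       + ‖(β - ((Real.exp K : ℝ) : ℂ) * α) /
            (((K : ℝ) : ℂ) * ((Real.exp K - Real.exp (-K) : ℝ) : ℂ))‖ ^ 2)
    ≤ 100 * (‖α‖ ^ 2 + ‖β‖ ^ 2) := by
  have hK0 : 0 < K := one_pos.trans_le hK
  set E := Real.exp K with hE
  have hE0 : 0 < E := Real.exp_pos K
  have hE2 : 2 ≤ E := by
    have h1 : Real.exp 1 ≤ E := Real.exp_le_exp.mpr hK
    have h2 := Real.add_one_le_exp 1
    linarith
  have hEneg : Real.exp (-K) = E⁻¹ := Real.exp_neg K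
  have hinv : E * E⁻¹ = 1 := mul_inv_cancel₀ hE0.ne'
  have hinvpos : 0 < E⁻¹ := by positivity
  have hden : E / 2 ≤ E - Real.exp (-K) := by
    rw [hEneg]
    nlinarith [hinv]
  have hdenpos : 0 < E - Real.exp (-K) := by linarith
  set M : ℝ := K * (E - Real.exp (-K)) with hM
  have hM0 : 0 < M := by positivity
  have hnd : ‖(((K : ℝ) : ℂ) * ((E - Real.exp (-K) : ℝ) : ℂ))‖ = M := by
    rw [norm_mul, Complex.norm_real, Complex.norm_real, Real.norm_eq_abs, Real.norm_eq_abs,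
      abs_of_pos hK0, abs_of_pos hdenpos]
  have hNE : ‖((E : ℝ) : ℂ)‖ = E := by
    rw [Complex.norm_real, Real.norm_eq_abs, abs_of_pos hE0]
  set N1 := ‖((E : ℝ) : ℂ) * β - α‖ with hN1
  set N2 := ‖β - ((E : ℝ) : ℂ) * α‖ with hN2
  have hN1b : N1 ≤ E * ‖β‖ + ‖α‖ := by
    rw [hN1]
    refine (norm_sub_le _ _).trans ?_
    rw [norm_mul, hNE]
  have hN2b : N2 ≤ ‖β‖ + E * ‖α‖ := by
    rw [hN2]
    refine (norm_sub_le _ _).trans ?_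
    rw [norm_mul, hNE]
  have hrw : ‖(((E : ℝ) : ℂ) * β - α) / (((K : ℝ) : ℂ) * ((E - Real.exp (-K) : ℝ) : ℂ))‖ ^ 2
      + ‖(β - ((E : ℝ) : ℂ) * α) / (((K : ℝ) : ℂ) * ((E - Real.exp (-K) : ℝ) : ℂ))‖ ^ 2
      = (N1 ^ 2 + N2 ^ 2) / M ^ 2 := by
    rw [norm_div, norm_div, hnd, div_pow, div_pow, ← add_div]
  rw [hrw, ← mul_div_assoc, div_le_iff₀ (by positivity : (0:ℝ) < M ^ 2)]
  have hna : 0 ≤ ‖α‖ := norm_nonneg _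
  have hnb : 0 ≤ ‖β‖ := norm_nonneg _
  have hN1nn : 0 ≤ N1 := norm_nonneg _
  have hN2nn : 0 ≤ N2 := norm_nonneg _
  have hs1 : N1 ^ 2 ≤ (E * ‖β‖ + ‖α‖) ^ 2 := pow_le_pow_left₀ hN1nn hN1b 2
  have hs2 : N2 ^ 2 ≤ (‖β‖ + E * ‖α‖) ^ 2 := pow_le_pow_left₀ hN2nn hN2b 2
  have hsum : N1 ^ 2 + N2 ^ 2 ≤ 2 * (E ^ 2 + 1) * (‖α‖ ^ 2 + ‖β‖ ^ 2) := by
    nlinarith [sq_nonneg (E * ‖β‖ - ‖α‖), sq_nonneg (‖β‖ - E * ‖α‖)]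
  have hM2 : (K * (E / 2)) ^ 2 ≤ M ^ 2 := by
    have h : K * (E / 2) ≤ M := by
      rw [hM]
      exact mul_le_mul_of_nonneg_left hden hK0.le
    exact pow_le_pow_left₀ (by positivity) h 2
  have hstep : K * (N1 ^ 2 + N2 ^ 2) ≤ K * (2 * (E ^ 2 + 1) * (‖α‖ ^ 2 + ‖β‖ ^ 2)) :=
    mul_le_mul_of_nonneg_left hsum hK0.le
  calc K * (N1 ^ 2 + N2 ^ 2) ≤ K * (2 * (E ^ 2 + 1) * (‖α‖ ^ 2 + ‖β‖ ^ 2)) := hstep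
    _ ≤ 100 * (‖α‖ ^ 2 + ‖β‖ ^ 2) * (K * (E / 2)) ^ 2 := by
        have hS : (0:ℝ) ≤ ‖α‖ ^ 2 + ‖β‖ ^ 2 := by positivity
        have hKK : K ≤ K ^ 2 := by nlinarith
        have hE4 : 4 ≤ E ^ 2 := by nlinarith
        have p1 : K * E ^ 2 ≤ K ^ 2 * E ^ 2 := mul_le_mul_of_nonneg_right hKK (sq_nonneg E)
        have p2 : 4 * K ≤ E ^ 2 * K := mul_le_mul_of_nonneg_right hE4 hK0.le
        have hcoef : K * (2 * (E ^ 2 + 1)) ≤ 100 * (K * (E / 2)) ^ 2 := by nlinarith [p1, p2, hK0]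
        calc K * (2 * (E ^ 2 + 1) * (‖α‖ ^ 2 + ‖β‖ ^ 2))
            = (K * (2 * (E ^ 2 + 1))) * (‖α‖ ^ 2 + ‖β‖ ^ 2) := by ring
          _ ≤ (100 * (K * (E / 2)) ^ 2) * (‖α‖ ^ 2 + ‖β‖ ^ 2) := mul_le_mul_of_nonneg_right hcoef hS
          _ = 100 * (‖α‖ ^ 2 + ‖β‖ ^ 2) * (K * (E / 2)) ^ 2 := by ring
    _ ≤ 100 * (‖α‖ ^ 2 + ‖β‖ ^ 2) * M ^ 2 := by
        have h100 : 0 ≤ 100 * (‖α‖ ^ 2 + ‖β‖ ^ 2) := by positivity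
        exact mul_le_mul_of_nonneg_left hM2 h100

theorem stmt5 :
    ∃ C : ℝ, 0 < C ∧ ∀ (k : ℤ), k ≠ 0 → ∀ (α β : ℂ) (hhat : ℝ → ℂ),
      (hhat = fun y : ℝ =>
        ((((Real.exp |(k:ℝ)| : ℝ) : ℂ) * β - α) /
            (((|(k:ℝ)| : ℝ) : ℂ) * ((Real.exp |(k:ℝ)| - Real.exp (-|(k:ℝ)|) : ℝ) : ℂ)))
          * Complex.exp ((|(k:ℝ)| * (y - 1) : ℝ) : ℂ)
        + ((β - ((Real.exp |(k:ℝ)| : ℝ) : ℂ) * α) /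
            (((|(k:ℝ)| : ℝ) : ℂ) * ((Real.exp |(k:ℝ)| - Real.exp (-|(k:ℝ)|) : ℝ) : ℂ)))
          * Complex.exp ((-(|(k:ℝ)| * y) : ℝ) : ℂ)) →
      (k : ℝ) ^ 2 * (∫ y in Icc (0:ℝ) 1, ‖hhat y‖ ^ 2) ≤ C * (‖α‖ ^ 2 + ‖β‖ ^ 2) ∧
      (∫ y in Icc (0:ℝ) 1, ‖deriv hhat y‖ ^ 2) ≤ C * (‖α‖ ^ 2 + ‖β‖ ^ 2) := by
  refine ⟨100, by norm_num, ?_⟩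
  intro k hk α β hhat hdef
  subst hdef
  set K : ℝ := |(k:ℝ)| with hKdef
  have hK : 1 ≤ K := by
    rw [hKdef, ← Int.cast_abs]
    exact_mod_cast Int.one_le_abs hk
  have hK0 : 0 < K := one_pos.trans_le hK
  set a : ℂ := (((Real.exp K : ℝ) : ℂ) * β - α) /
      (((K : ℝ) : ℂ) * ((Real.exp K - Real.exp (-K) : ℝ) : ℂ)) with ha
  set b : ℂ := (β - ((Real.exp K : ℝ) : ℂ) * α) /
      (((K : ℝ) : ℂ) * ((Real.exp K - Real.exp (-K) : ℝ) : ℂ)) with hb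
  have hfinal : K * (‖a‖ ^ 2 + ‖b‖ ^ 2) ≤ 100 * (‖α‖ ^ 2 + ‖β‖ ^ 2) := by
    rw [ha, hb]
    exact final_bound K hK α β
  constructor
  · have hbd1 := key2 K hK a b
    have hmul : ((k:ℝ)) ^ 2 = K ^ 2 := by rw [hKdef, sq_abs]
    rw [hmul]
    calc K ^ 2 * (∫ y in Icc (0:ℝ) 1,
          ‖a * Complex.exp (((K * (y - 1) : ℝ)) : ℂ) + b * Complex.exp (((-(K * y) : ℝ)) : ℂ)‖ ^ 2)
        ≤ K ^ 2 * ((‖a‖ ^ 2 + ‖b‖ ^ 2) / K) := by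
          exact mul_le_mul_of_nonneg_left hbd1 (sq_nonneg K)
      _ = K * (‖a‖ ^ 2 + ‖b‖ ^ 2) := by field_simp
      _ ≤ 100 * (‖α‖ ^ 2 + ‖β‖ ^ 2) := hfinal
  · have hderiv : deriv (fun y : ℝ =>
        a * Complex.exp (((K * (y - 1) : ℝ)) : ℂ) + b * Complex.exp (((-(K * y) : ℝ)) : ℂ))
        = fun y : ℝ => (a * (K : ℂ)) * Complex.exp (((K * (y - 1) : ℝ)) : ℂ)
            + (b * (-(K : ℂ))) * Complex.exp (((-(K * y) : ℝ)) : ℂ) := by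
      funext y
      have h1 : HasDerivAt (fun y : ℝ => (K * (y - 1) : ℝ)) K y := by
        simpa using ((hasDerivAt_id y).sub_const 1).const_mul K
      have h2 : HasDerivAt (fun y : ℝ => (-(K * y) : ℝ)) (-K) y := by
        simpa using ((hasDerivAt_id y).const_mul (-K))
      have H1 := (h1.ofReal_comp.cexp.const_mul a)
      have H2 := (h2.ofReal_comp.cexp.const_mul b)
      have H : HasDerivAt (fun y : ℝ =>
          a * Complex.exp (((K * (y - 1) : ℝ)) : ℂ) + b * Complex.exp (((-(K * y) : ℝ)) : ℂ)) _ y :=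
        H1.add H2
      rw [H.deriv]
      push_cast
      ring
    rw [hderiv]
    have hbd2 := key2 K hK (a * (K : ℂ)) (b * (-(K : ℂ)))
    refine hbd2.trans ?_
    have hnK : ‖((K : ℝ) : ℂ)‖ = K := by
      rw [Complex.norm_real, Real.norm_eq_abs, abs_of_pos hK0]
    have hnn : ‖(-(K : ℂ))‖ = K := by
      rw [norm_neg, hnK]
    have heq : (‖a * (K : ℂ)‖ ^ 2 + ‖b * (-(K : ℂ))‖ ^ 2) / K = K * (‖a‖ ^ 2 + ‖b‖ ^ 2) := by
      rw [norm_mul, norm_mul, hnK, hnn]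
      field_simp
    rw [heq]
    exact hfinal
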